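/- Let μ₁ ~ N(0, σ²), ε ~ N(0, 1/n) independent of μ₁, set ȳ₁ = μ₁ + ε, and let ȳ₂ ~ N(0, σ² + 1/n) be independent of (μ₁, ε). For fixed w = (w₁, w₂) with w₁ + w₂ = 1, define d = 2(ȳ₁ - μ₁)(w₁ȳ₁ + w₂ȳ₂). Then E[d] = 2w₁/n and Var[d] = 4(σ² + 2/n)w₁²/n + 4(σ² + 1/n)w₂²/n. -/

import Mathlib

open MeasureTheory ProbabilityTheory Real Filter
open scoped NNReal ENNReal

namespace Stmt3Aux

lemma integrable_pow_mul_gauss (k : ℕ) {b : ℝ} (hb : 0 < b) :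
    Integrable (fun x : ℝ => x ^ k * rexp (-b * x ^ 2)) := by
  have h := integrable_rpow_mul_exp_neg_mul_sq hb (s := (k : ℝ))
    (by exact_mod_cast neg_one_lt_zero.trans_le (Nat.cast_nonneg k))
  simpa [Real.rpow_natCast] using h

lemma integral_pow_mul_gauss_step (k : ℕ) {b : ℝ} (hb : 0 < b) :
    ∫ x : ℝ, x ^ (k + 2) * rexp (-b * x ^ 2)
      = ((k + 1 : ℝ) / (2 * b)) * ∫ x : ℝ, x ^ k * rexp (-b * x ^ 2) := by
  have hu : ∀ x : ℝ, HasDerivAt (fun y : ℝ => y ^ (k + 1)) (((k : ℝ) + 1) * x ^ k) x := by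
    intro x
    simpa using hasDerivAt_pow (k + 1) x
  have hv : ∀ x : ℝ, HasDerivAt (fun y : ℝ => -(2 * b)⁻¹ * rexp (-b * y ^ 2))
      (x * rexp (-b * x ^ 2)) x := by
    intro x
    have h1 : HasDerivAt (fun y : ℝ => -b * y ^ 2) (-b * (2 * x)) x := by
      simpa using (hasDerivAt_pow 2 x).const_mul (-b)
    have h2 := (h1.exp).const_mul (-(2 * b)⁻¹)
    refine h2.congr_deriv ?_
    have := hb.ne'
    field_simp
  have key := integral_mul_deriv_eq_deriv_mul_of_integrable
    (u := fun y : ℝ => y ^ (k + 1)) (u' := fun y : ℝ => ((k : ℝ) + 1) * y ^ k)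
    (v := fun y : ℝ => -(2 * b)⁻¹ * rexp (-b * y ^ 2))
    (v' := fun y : ℝ => y * rexp (-b * y ^ 2)) (fun x _ => hu x) (fun x _ => hv x)
    (by
      have : (fun y : ℝ => y ^ (k + 1) * (y * rexp (-b * y ^ 2)))
          = fun y : ℝ => y ^ (k + 2) * rexp (-b * y ^ 2) := by funext y; ring
      show Integrable ((fun y : ℝ => y ^ (k+1)) * _)
      rw [Pi.mul_def]
      simp only [neg_mul] at this ⊢
      rw [this]
      simpa [neg_mul] using integrable_pow_mul_gauss (k + 2) hb)
    (by
      have h := (integrable_pow_mul_gauss k hb).const_mul (((k : ℝ) + 1) * (-(2 * b)⁻¹))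
      show Integrable ((fun y : ℝ => ((k : ℝ) + 1) * y ^ k) * _)
      refine h.congr ?_
      filter_upwards with y
      simp [Pi.mul_def]; ring)
    (by
      have h := (integrable_pow_mul_gauss (k + 1) hb).const_mul (-(2 * b)⁻¹)
      refine h.congr ?_
      filter_upwards with y
      simp [Pi.mul_def]; ring)
  have lhs_eq : ∫ x : ℝ, x ^ (k + 1) * (x * rexp (-b * x ^ 2))
      = ∫ x : ℝ, x ^ (k + 2) * rexp (-b * x ^ 2) := by
    congr 1; funext x; ring
  rw [lhs_eq] at key
  rw [key]
  rw [← integral_neg]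
  rw [show (fun x : ℝ => -(((k : ℝ) + 1) * x ^ k * (-(2 * b)⁻¹ * rexp (-b * x ^ 2))))
      = fun x : ℝ => (((k : ℝ) + 1) / (2 * b)) * (x ^ k * rexp (-b * x ^ 2)) by
    funext x; field_simp]
  push_cast
  rw [integral_const_mul]

lemma integral_odd_pow_mul_gauss (k : ℕ) (hk : Odd k) {b : ℝ} :
    ∫ x : ℝ, x ^ k * rexp (-b * x ^ 2) = 0 := by
  have h : (∫ x : ℝ, (-x) ^ k * rexp (-b * (-x) ^ 2)) = ∫ x : ℝ, x ^ k * rexp (-b * x ^ 2) :=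
    integral_neg_eq_self (fun x : ℝ => x ^ k * rexp (-b * x ^ 2)) volume
  simp only [hk.neg_pow, neg_sq, neg_mul] at h
  rw [integral_neg] at h
  simp only [neg_mul] at *
  linarith

lemma gaussianPDF_eq_toNNReal (v : ℝ≥0) :
    gaussianPDF 0 v = fun x => ((gaussianPDFReal 0 v x).toNNReal : ℝ≥0∞) := rfl

lemma integral_fun_gaussianReal {v : ℝ≥0} (hv : v ≠ 0) (g : ℝ → ℝ) :
    ∫ x, g x ∂(gaussianReal 0 v) = ∫ x, gaussianPDFReal 0 v x * g x := by
  rw [gaussianReal_of_var_ne_zero _ hv, gaussianPDF_eq_toNNReal,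
    integral_withDensity_eq_integral_smul
      ((measurable_gaussianPDFReal 0 v).real_toNNReal) g]
  congr 1
  funext x
  rw [NNReal.smul_def, Real.coe_toNNReal _ (gaussianPDFReal_nonneg 0 v x)]
  rfl

lemma pdfReal_eq (v : ℝ≥0) (hv : v ≠ 0) (x : ℝ) :
    gaussianPDFReal 0 v x = (√(2 * π * v))⁻¹ * rexp (-(((2:ℝ) * v)⁻¹) * x ^ 2) := by
  rw [gaussianPDFReal]
  congr 1
  rw [sub_zero]
  field_simp

lemma integral_pow_gaussianReal {v : ℝ≥0} (hv : v ≠ 0) (k : ℕ) :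
    ∫ x, x ^ k ∂(gaussianReal 0 v)
      = (√(2 * π * v))⁻¹ * ∫ x : ℝ, x ^ k * rexp (-(((2:ℝ) * v)⁻¹) * x ^ 2) := by
  rw [integral_fun_gaussianReal hv]
  rw [show (fun x : ℝ => gaussianPDFReal 0 v x * x ^ k)
      = fun x : ℝ => (√(2 * π * v))⁻¹ * (x ^ k * rexp (-(((2:ℝ) * v)⁻¹) * x ^ 2)) by
    funext x; rw [pdfReal_eq v hv]; ring]
  rw [integral_const_mul]

lemma hb_pos {v : ℝ≥0} (hv : v ≠ 0) : (0:ℝ) < ((2:ℝ) * v)⁻¹ := by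
  have : (0:ℝ) < v := by exact_mod_cast pos_iff_ne_zero.mpr hv
  positivity

lemma integral_gauss0 {v : ℝ≥0} (hv : v ≠ 0) :
    ∫ x : ℝ, x ^ 0 * rexp (-(((2:ℝ) * v)⁻¹) * x ^ 2) = √(2 * π * v) := by
  have hvpos : (0:ℝ) < v := by exact_mod_cast pos_iff_ne_zero.mpr hv
  simp only [pow_zero, one_mul]
  rw [integral_gaussian]
  congr 1
  field_simp

lemma integrable_pow_gaussianReal (v : ℝ≥0) (k : ℕ) :
    Integrable (fun x : ℝ => x ^ k) (gaussianReal 0 v) := by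
  by_cases hv : v = 0
  · subst hv
    simp only [gaussianReal_zero_var]
    refine ⟨(measurable_id.pow_const k).aestronglyMeasurable, ?_⟩
    simp only [HasFiniteIntegral, lintegral_dirac]
    exact ENNReal.coe_lt_top
  · rw [gaussianReal_of_var_ne_zero _ hv, gaussianPDF_eq_toNNReal,
      integrable_withDensity_iff_integrable_smul
        ((measurable_gaussianPDFReal 0 v).real_toNNReal)]
    have h := (integrable_pow_mul_gauss k (hb_pos hv)).const_mul (√(2 * π * v))⁻¹
    refine h.congr ?_
    filter_upwards with x
    rw [NNReal.smul_def, Real.coe_toNNReal _ (gaussianPDFReal_nonneg 0 v x),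
      pdfReal_eq v hv, smul_eq_mul]
    ring

lemma moment_one_gaussianReal (v : ℝ≥0) : ∫ x, x ∂(gaussianReal 0 v) = 0 := by
  by_cases hv : v = 0
  · subst hv; simp
  · have h := integral_pow_gaussianReal hv 1
    have h0 := integral_odd_pow_mul_gauss 1 ⟨0, by norm_num⟩ (b := ((2:ℝ) * v)⁻¹)
    simp only [pow_one] at h h0
    rw [h, h0, mul_zero]

lemma moment_three_gaussianReal (v : ℝ≥0) : ∫ x, x ^ 3 ∂(gaussianReal 0 v) = 0 := by
  by_cases hv : v = 0
  · subst hv; simp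
  · rw [integral_pow_gaussianReal hv 3, integral_odd_pow_mul_gauss 3 ⟨1, by norm_num⟩, mul_zero]

lemma moment_two_gaussianReal (v : ℝ≥0) : ∫ x, x ^ 2 ∂(gaussianReal 0 v) = v := by
  by_cases hv : v = 0
  · subst hv; simp
  · have hvpos : (0:ℝ) < v := by exact_mod_cast pos_iff_ne_zero.mpr hv
    have hsq : (0:ℝ) < √(2 * π * v) := Real.sqrt_pos.mpr (by positivity)
    rw [integral_pow_gaussianReal hv 2,
      show (2:ℕ) = 0 + 2 by rfl, integral_pow_mul_gauss_step 0 (hb_pos hv),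
      integral_gauss0 hv]
    rw [show ((0:ℕ) + 1 : ℝ) / (2 * ((2:ℝ) * v)⁻¹) = v by field_simp; simp]
    field_simp

lemma moment_four_gaussianReal (v : ℝ≥0) : ∫ x, x ^ 4 ∂(gaussianReal 0 v) = 3 * v ^ 2 := by
  by_cases hv : v = 0
  · subst hv; simp
  · have hvpos : (0:ℝ) < v := by exact_mod_cast pos_iff_ne_zero.mpr hv
    have hsq : (0:ℝ) < √(2 * π * v) := Real.sqrt_pos.mpr (by positivity)
    rw [integral_pow_gaussianReal hv 4,
      show (4:ℕ) = 2 + 2 by rfl, integral_pow_mul_gauss_step 2 (hb_pos hv),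
      integral_pow_mul_gauss_step 0 (hb_pos hv),
      integral_gauss0 hv]
    rw [show ((2:ℕ) + 1 : ℝ) / (2 * ((2:ℝ) * v)⁻¹) = 3 * v by field_simp; ring,
        show ((0:ℕ) + 1 : ℝ) / (2 * ((2:ℝ) * v)⁻¹) = v by field_simp; simp]
    field_simp

variable {Ω : Type*} [MeasurableSpace Ω] {μ : Measure Ω}

lemma aemeasurable_of_map_gaussian {X : Ω → ℝ} {v : ℝ≥0}
    (hX : Measure.map X μ = gaussianReal 0 v) : AEMeasurable X μ := by
  by_contra h
  rw [Measure.map_of_not_aemeasurable h] at hX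
  exact (IsProbabilityMeasure.ne_zero (gaussianReal 0 v)) hX.symm

lemma integrable_pow_comp {X : Ω → ℝ} {v : ℝ≥0}
    (hX : Measure.map X μ = gaussianReal 0 v) (k : ℕ) :
    Integrable (fun ω => X ω ^ k) μ := by
  have h := integrable_pow_gaussianReal v k
  rw [← hX] at h
  exact (integrable_map_measure (measurable_id.pow_const k).aestronglyMeasurable
    (aemeasurable_of_map_gaussian hX)).mp h

lemma integral_pow_comp {X : Ω → ℝ} {v : ℝ≥0}
    (hX : Measure.map X μ = gaussianReal 0 v) (k : ℕ) :
    ∫ ω, X ω ^ k ∂μ = ∫ x, x ^ k ∂(gaussianReal 0 v) := by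
  rw [← hX]
  exact (integral_map (aemeasurable_of_map_gaussian hX) (f := fun x : ℝ => x ^ k)
    (measurable_id.pow_const k).aestronglyMeasurable).symm

end Stmt3Aux

open Stmt3Aux

/-- Mean and variance of the principal deviation of the DR utility estimate for
specialist prediction (study 1) in Example 1. Here `ȳ₁ = μ₁ + ε`. -/
theorem stmt_3 {Ω : Type*} [MeasurableSpace Ω] (μ : Measure Ω) [IsProbabilityMeasure μ]
    (σ : ℝ) (n : ℕ) (hn : 0 < n) (mu1 eps y2 : Ω → ℝ)
    (hmu : Measure.map mu1 μ = gaussianReal 0 (σ ^ 2 : ℝ).toNNReal)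
    (heps : Measure.map eps μ = gaussianReal 0 (1 / n : ℝ).toNNReal)
    (hy2 : Measure.map y2 μ = gaussianReal 0 (σ ^ 2 + 1 / n : ℝ).toNNReal)
    (hind1 : IndepFun mu1 eps μ)
    (hind2 : IndepFun (fun ω => (mu1 ω, eps ω)) y2 μ)
    (w1 w2 : ℝ) (hw : w1 + w2 = 1) :
    (∫ ω, 2 * ((mu1 ω + eps ω) - mu1 ω)
        * (w1 * (mu1 ω + eps ω) + w2 * y2 ω) ∂μ) = 2 * w1 / n ∧
    (∫ ω, (2 * ((mu1 ω + eps ω) - mu1 ω)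
          * (w1 * (mu1 ω + eps ω) + w2 * y2 ω) - 2 * w1 / n) ^ 2 ∂μ)
      = 4 * (σ ^ 2 + 2 / n) * w1 ^ 2 / n + 4 * (σ ^ 2 + 1 / n) * w2 ^ 2 / n := by
  have hnR : (0:ℝ) < n := by exact_mod_cast hn
  have hnne : (n:ℝ) ≠ 0 := ne_of_gt hnR
  -- coercion facts
  have hc1 : ((σ ^ 2 : ℝ).toNNReal : ℝ) = σ ^ 2 := Real.coe_toNNReal _ (sq_nonneg σ)
  have hc2 : ((1 / n : ℝ).toNNReal : ℝ) = 1 / n :=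
    Real.coe_toNNReal _ (by positivity)
  have hc3 : ((σ ^ 2 + 1 / n : ℝ).toNNReal : ℝ) = σ ^ 2 + 1 / n :=
    Real.coe_toNNReal _ (by positivity)
  -- integrability of powers
  have im1 : Integrable (fun ω => mu1 ω ^ 1) μ := integrable_pow_comp hmu 1
  have im2 : Integrable (fun ω => mu1 ω ^ 2) μ := integrable_pow_comp hmu 2
  have ie1 : Integrable (fun ω => eps ω ^ 1) μ := integrable_pow_comp heps 1
  have ie2 : Integrable (fun ω => eps ω ^ 2) μ := integrable_pow_comp heps 2
  have ie3 : Integrable (fun ω => eps ω ^ 3) μ := integrable_pow_comp heps 3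
  have ie4 : Integrable (fun ω => eps ω ^ 4) μ := integrable_pow_comp heps 4
  have iy1 : Integrable (fun ω => y2 ω ^ 1) μ := integrable_pow_comp hy2 1
  have iy2 : Integrable (fun ω => y2 ω ^ 2) μ := integrable_pow_comp hy2 2
  simp only [pow_one] at im1 ie1 iy1
  -- moments
  have Em1 : ∫ ω, mu1 ω ∂μ = 0 := by
    have h := integral_pow_comp hmu 1; simp only [pow_one] at h
    rw [h, moment_one_gaussianReal]
  have Em2 : ∫ ω, mu1 ω ^ 2 ∂μ = σ ^ 2 := by
    rw [integral_pow_comp hmu 2, moment_two_gaussianReal, hc1]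
  have Ee1 : ∫ ω, eps ω ∂μ = 0 := by
    have h := integral_pow_comp heps 1; simp only [pow_one] at h
    rw [h, moment_one_gaussianReal]
  have Ee2 : ∫ ω, eps ω ^ 2 ∂μ = 1 / n := by
    rw [integral_pow_comp heps 2, moment_two_gaussianReal, hc2]
  have Ee3 : ∫ ω, eps ω ^ 3 ∂μ = 0 := by
    rw [integral_pow_comp heps 3, moment_three_gaussianReal]
  have Ee4 : ∫ ω, eps ω ^ 4 ∂μ = 3 * (1 / n) ^ 2 := by
    rw [integral_pow_comp heps 4, moment_four_gaussianReal, hc2]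
  have Ey1 : ∫ ω, y2 ω ∂μ = 0 := by
    have h := integral_pow_comp hy2 1; simp only [pow_one] at h
    rw [h, moment_one_gaussianReal]
  have Ey2 : ∫ ω, y2 ω ^ 2 ∂μ = σ ^ 2 + 1 / n := by
    rw [integral_pow_comp hy2 2, moment_two_gaussianReal, hc3]
  -- independence of composed functions
  have hem : IndepFun eps mu1 μ := hind1.symm
  have he2m2 : IndepFun (fun ω => eps ω ^ 2) (fun ω => mu1 ω ^ 2) μ :=
    hem.comp (measurable_id.pow_const 2) (measurable_id.pow_const 2)
  have he2m : IndepFun (fun ω => eps ω ^ 2) mu1 μ :=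
    hem.comp (measurable_id.pow_const 2) measurable_id
  have he3m : IndepFun (fun ω => eps ω ^ 3) mu1 μ :=
    hem.comp (measurable_id.pow_const 3) measurable_id
  have hey : IndepFun eps y2 μ := hind2.comp measurable_snd measurable_id
  have he2y2 : IndepFun (fun ω => eps ω ^ 2) (fun ω => y2 ω ^ 2) μ :=
    hind2.comp (measurable_snd.pow_const 2) (measurable_id.pow_const 2)
  have he3y : IndepFun (fun ω => eps ω ^ 3) y2 μ :=
    hind2.comp (measurable_snd.pow_const 3) measurable_id
  have hemy : IndepFun (fun ω => eps ω * mu1 ω) y2 μ :=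
    hind2.comp (measurable_snd.mul measurable_fst) measurable_id
  have he2my : IndepFun (fun ω => eps ω ^ 2 * mu1 ω) y2 μ :=
    hind2.comp ((measurable_snd.pow_const 2).mul measurable_fst) measurable_id
  -- integrable products
  have Iem : Integrable (fun ω => eps ω * mu1 ω) μ := hem.integrable_mul ie1 im1
  have Ie2m2 : Integrable (fun ω => eps ω ^ 2 * mu1 ω ^ 2) μ := he2m2.integrable_mul ie2 im2
  have Ie2m : Integrable (fun ω => eps ω ^ 2 * mu1 ω) μ := he2m.integrable_mul ie2 im1
  have Ie3m : Integrable (fun ω => eps ω ^ 3 * mu1 ω) μ := he3m.integrable_mul ie3 im1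
  have Iey : Integrable (fun ω => eps ω * y2 ω) μ := hey.integrable_mul ie1 iy1
  have Ie2y2 : Integrable (fun ω => eps ω ^ 2 * y2 ω ^ 2) μ := he2y2.integrable_mul ie2 iy2
  have Ie3y : Integrable (fun ω => eps ω ^ 3 * y2 ω) μ := he3y.integrable_mul ie3 iy1
  have Iemy : Integrable (fun ω => eps ω * mu1 ω * y2 ω) μ := hemy.integrable_mul Iem iy1
  have Ie2my : Integrable (fun ω => eps ω ^ 2 * mu1 ω * y2 ω) μ := he2my.integrable_mul Ie2m iy1
  -- product moments
  have Eem : ∫ ω, eps ω * mu1 ω ∂μ = 0 := by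
    have h := hem.integral_fun_mul_eq_mul_integral ie1.1 im1.1
    simpa [Em1] using h
  have Ee2m2' : ∫ ω, eps ω ^ 2 * mu1 ω ^ 2 ∂μ = (1 / n) * σ ^ 2 := by
    have h := he2m2.integral_fun_mul_eq_mul_integral ie2.1 im2.1
    simpa [Ee2, Em2] using h
  have Ee2m' : ∫ ω, eps ω ^ 2 * mu1 ω ∂μ = 0 := by
    have h := he2m.integral_fun_mul_eq_mul_integral ie2.1 im1.1
    simpa [Em1] using h
  have Ee3m' : ∫ ω, eps ω ^ 3 * mu1 ω ∂μ = 0 := by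
    have h := he3m.integral_fun_mul_eq_mul_integral ie3.1 im1.1
    simpa [Em1] using h
  have Eey : ∫ ω, eps ω * y2 ω ∂μ = 0 := by
    have h := hey.integral_fun_mul_eq_mul_integral ie1.1 iy1.1
    simpa [Ey1] using h
  have Ee2y2' : ∫ ω, eps ω ^ 2 * y2 ω ^ 2 ∂μ = (1 / n) * (σ ^ 2 + 1 / n) := by
    have h := he2y2.integral_fun_mul_eq_mul_integral ie2.1 iy2.1
    simpa [Ee2, Ey2] using h
  have Ee3y' : ∫ ω, eps ω ^ 3 * y2 ω ∂μ = 0 := by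
    have h := he3y.integral_fun_mul_eq_mul_integral ie3.1 iy1.1
    simpa [Ey1] using h
  have Eemy : ∫ ω, eps ω * mu1 ω * y2 ω ∂μ = 0 := by
    have h := hemy.integral_fun_mul_eq_mul_integral Iem.1 iy1.1
    simpa [Ey1] using h
  have Ee2my : ∫ ω, eps ω ^ 2 * mu1 ω * y2 ω ∂μ = 0 := by
    have h := he2my.integral_fun_mul_eq_mul_integral Ie2m.1 iy1.1
    simpa [Ey1] using h
  constructor
  · -- mean
    rw [show (fun ω => 2 * ((mu1 ω + eps ω) - mu1 ω) * (w1 * (mu1 ω + eps ω) + w2 * y2 ω))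
        = fun ω => 2 * w1 * (eps ω * mu1 ω)
            + (2 * w1 * (eps ω ^ 2) + 2 * w2 * (eps ω * y2 ω)) by
      funext ω; ring]
    have V1 : (∫ ω, (2 * w1 * (eps ω * mu1 ω)
          + (2 * w1 * (eps ω ^ 2) + 2 * w2 * (eps ω * y2 ω))) ∂μ)
        = (∫ ω, 2 * w1 * (eps ω * mu1 ω) ∂μ)
          + ∫ ω, (2 * w1 * (eps ω ^ 2) + 2 * w2 * (eps ω * y2 ω)) ∂μ :=
      integral_add (Iem.const_mul _) ((ie2.const_mul _).add (Iey.const_mul _))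
    have V2 : (∫ ω, (2 * w1 * (eps ω ^ 2) + 2 * w2 * (eps ω * y2 ω)) ∂μ)
        = (∫ ω, 2 * w1 * (eps ω ^ 2) ∂μ) + ∫ ω, 2 * w2 * (eps ω * y2 ω) ∂μ :=
      integral_add (ie2.const_mul _) (Iey.const_mul _)
    rw [V1, V2, integral_const_mul, integral_const_mul, integral_const_mul, Eem, Ee2, Eey]
    field_simp
    ring
  · -- variance
    rw [show (fun ω => (2 * ((mu1 ω + eps ω) - mu1 ω) * (w1 * (mu1 ω + eps ω) + w2 * y2 ω)
          - 2 * w1 / n) ^ 2)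
        = fun ω => 4 * w1 ^ 2 * (eps ω ^ 2 * mu1 ω ^ 2)
            + (4 * w1 ^ 2 * (eps ω ^ 4)
            + ((-8 * w1 ^ 2 / n) * (eps ω ^ 2)
            + (4 * w2 ^ 2 * (eps ω ^ 2 * y2 ω ^ 2)
            + (8 * w1 ^ 2 * (eps ω ^ 3 * mu1 ω)
            + ((-8 * w1 ^ 2 / n) * (eps ω * mu1 ω)
            + (8 * w1 * w2 * (eps ω ^ 2 * mu1 ω * y2 ω)
            + (8 * w1 * w2 * (eps ω ^ 3 * y2 ω)
            + ((-8 * w1 * w2 / n) * (eps ω * y2 ω)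
            + 4 * w1 ^ 2 / n ^ 2)))))))) by
      funext ω; field_simp; ring]
    have V1 : (∫ ω, (4 * w1 ^ 2 * (eps ω ^ 2 * mu1 ω ^ 2)
            + (4 * w1 ^ 2 * (eps ω ^ 4)
            + ((-8 * w1 ^ 2 / n) * (eps ω ^ 2)
            + (4 * w2 ^ 2 * (eps ω ^ 2 * y2 ω ^ 2)
            + (8 * w1 ^ 2 * (eps ω ^ 3 * mu1 ω)
            + ((-8 * w1 ^ 2 / n) * (eps ω * mu1 ω)
            + (8 * w1 * w2 * (eps ω ^ 2 * mu1 ω * y2 ω)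
            + (8 * w1 * w2 * (eps ω ^ 3 * y2 ω)
            + ((-8 * w1 * w2 / n) * (eps ω * y2 ω)
            + 4 * w1 ^ 2 / n ^ 2))))))))) ∂μ)
        = (∫ ω, 4 * w1 ^ 2 * (eps ω ^ 2 * mu1 ω ^ 2) ∂μ) + ∫ ω, (4 * w1 ^ 2 * (eps ω ^ 4)
            + ((-8 * w1 ^ 2 / n) * (eps ω ^ 2)
            + (4 * w2 ^ 2 * (eps ω ^ 2 * y2 ω ^ 2)
            + (8 * w1 ^ 2 * (eps ω ^ 3 * mu1 ω)
            + ((-8 * w1 ^ 2 / n) * (eps ω * mu1 ω)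
            + (8 * w1 * w2 * (eps ω ^ 2 * mu1 ω * y2 ω)
            + (8 * w1 * w2 * (eps ω ^ 3 * y2 ω)
            + ((-8 * w1 * w2 / n) * (eps ω * y2 ω)
            + 4 * w1 ^ 2 / n ^ 2)))))))) ∂μ :=
      integral_add (Ie2m2.const_mul _) ((ie4.const_mul _).add ((ie2.const_mul _).add ((Ie2y2.const_mul _).add ((Ie3m.const_mul _).add ((Iem.const_mul _).add ((Ie2my.const_mul _).add ((Ie3y.const_mul _).add ((Iey.const_mul _).add (integrable_const _)))))))))
    have V2 : (∫ ω, (4 * w1 ^ 2 * (eps ω ^ 4)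
            + ((-8 * w1 ^ 2 / n) * (eps ω ^ 2)
            + (4 * w2 ^ 2 * (eps ω ^ 2 * y2 ω ^ 2)
            + (8 * w1 ^ 2 * (eps ω ^ 3 * mu1 ω)
            + ((-8 * w1 ^ 2 / n) * (eps ω * mu1 ω)
            + (8 * w1 * w2 * (eps ω ^ 2 * mu1 ω * y2 ω)
            + (8 * w1 * w2 * (eps ω ^ 3 * y2 ω)
            + ((-8 * w1 * w2 / n) * (eps ω * y2 ω)
            + 4 * w1 ^ 2 / n ^ 2)))))))) ∂μ)
        = (∫ ω, 4 * w1 ^ 2 * (eps ω ^ 4) ∂μ) + ∫ ω, ((-8 * w1 ^ 2 / n) * (eps ω ^ 2)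
            + (4 * w2 ^ 2 * (eps ω ^ 2 * y2 ω ^ 2)
            + (8 * w1 ^ 2 * (eps ω ^ 3 * mu1 ω)
            + ((-8 * w1 ^ 2 / n) * (eps ω * mu1 ω)
            + (8 * w1 * w2 * (eps ω ^ 2 * mu1 ω * y2 ω)
            + (8 * w1 * w2 * (eps ω ^ 3 * y2 ω)
            + ((-8 * w1 * w2 / n) * (eps ω * y2 ω)
            + 4 * w1 ^ 2 / n ^ 2))))))) ∂μ :=
      integral_add (ie4.const_mul _) ((ie2.const_mul _).add ((Ie2y2.const_mul _).add ((Ie3m.const_mul _).add ((Iem.const_mul _).add ((Ie2my.const_mul _).add ((Ie3y.const_mul _).add ((Iey.const_mul _).add (integrable_const _))))))))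
    have V3 : (∫ ω, ((-8 * w1 ^ 2 / n) * (eps ω ^ 2)
            + (4 * w2 ^ 2 * (eps ω ^ 2 * y2 ω ^ 2)
            + (8 * w1 ^ 2 * (eps ω ^ 3 * mu1 ω)
            + ((-8 * w1 ^ 2 / n) * (eps ω * mu1 ω)
            + (8 * w1 * w2 * (eps ω ^ 2 * mu1 ω * y2 ω)
            + (8 * w1 * w2 * (eps ω ^ 3 * y2 ω)
            + ((-8 * w1 * w2 / n) * (eps ω * y2 ω)
            + 4 * w1 ^ 2 / n ^ 2))))))) ∂μ)
        = (∫ ω, (-8 * w1 ^ 2 / n) * (eps ω ^ 2) ∂μ) + ∫ ω, (4 * w2 ^ 2 * (eps ω ^ 2 * y2 ω ^ 2)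
            + (8 * w1 ^ 2 * (eps ω ^ 3 * mu1 ω)
            + ((-8 * w1 ^ 2 / n) * (eps ω * mu1 ω)
            + (8 * w1 * w2 * (eps ω ^ 2 * mu1 ω * y2 ω)
            + (8 * w1 * w2 * (eps ω ^ 3 * y2 ω)
            + ((-8 * w1 * w2 / n) * (eps ω * y2 ω)
            + 4 * w1 ^ 2 / n ^ 2)))))) ∂μ :=
      integral_add (ie2.const_mul _) ((Ie2y2.const_mul _).add ((Ie3m.const_mul _).add ((Iem.const_mul _).add ((Ie2my.const_mul _).add ((Ie3y.const_mul _).add ((Iey.const_mul _).add (integrable_const _)))))))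
    have V4 : (∫ ω, (4 * w2 ^ 2 * (eps ω ^ 2 * y2 ω ^ 2)
            + (8 * w1 ^ 2 * (eps ω ^ 3 * mu1 ω)
            + ((-8 * w1 ^ 2 / n) * (eps ω * mu1 ω)
            + (8 * w1 * w2 * (eps ω ^ 2 * mu1 ω * y2 ω)
            + (8 * w1 * w2 * (eps ω ^ 3 * y2 ω)
            + ((-8 * w1 * w2 / n) * (eps ω * y2 ω)
            + 4 * w1 ^ 2 / n ^ 2)))))) ∂μ)
        = (∫ ω, 4 * w2 ^ 2 * (eps ω ^ 2 * y2 ω ^ 2) ∂μ) + ∫ ω, (8 * w1 ^ 2 * (eps ω ^ 3 * mu1 ω)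
            + ((-8 * w1 ^ 2 / n) * (eps ω * mu1 ω)
            + (8 * w1 * w2 * (eps ω ^ 2 * mu1 ω * y2 ω)
            + (8 * w1 * w2 * (eps ω ^ 3 * y2 ω)
            + ((-8 * w1 * w2 / n) * (eps ω * y2 ω)
            + 4 * w1 ^ 2 / n ^ 2))))) ∂μ :=
      integral_add (Ie2y2.const_mul _) ((Ie3m.const_mul _).add ((Iem.const_mul _).add ((Ie2my.const_mul _).add ((Ie3y.const_mul _).add ((Iey.const_mul _).add (integrable_const _))))))
    have V5 : (∫ ω, (8 * w1 ^ 2 * (eps ω ^ 3 * mu1 ω)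
            + ((-8 * w1 ^ 2 / n) * (eps ω * mu1 ω)
            + (8 * w1 * w2 * (eps ω ^ 2 * mu1 ω * y2 ω)
            + (8 * w1 * w2 * (eps ω ^ 3 * y2 ω)
            + ((-8 * w1 * w2 / n) * (eps ω * y2 ω)
            + 4 * w1 ^ 2 / n ^ 2))))) ∂μ)
        = (∫ ω, 8 * w1 ^ 2 * (eps ω ^ 3 * mu1 ω) ∂μ) + ∫ ω, ((-8 * w1 ^ 2 / n) * (eps ω * mu1 ω)
            + (8 * w1 * w2 * (eps ω ^ 2 * mu1 ω * y2 ω)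
            + (8 * w1 * w2 * (eps ω ^ 3 * y2 ω)
            + ((-8 * w1 * w2 / n) * (eps ω * y2 ω)
            + 4 * w1 ^ 2 / n ^ 2)))) ∂μ :=
      integral_add (Ie3m.const_mul _) ((Iem.const_mul _).add ((Ie2my.const_mul _).add ((Ie3y.const_mul _).add ((Iey.const_mul _).add (integrable_const _)))))
    have V6 : (∫ ω, ((-8 * w1 ^ 2 / n) * (eps ω * mu1 ω)
            + (8 * w1 * w2 * (eps ω ^ 2 * mu1 ω * y2 ω)
            + (8 * w1 * w2 * (eps ω ^ 3 * y2 ω)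
            + ((-8 * w1 * w2 / n) * (eps ω * y2 ω)
            + 4 * w1 ^ 2 / n ^ 2)))) ∂μ)
        = (∫ ω, (-8 * w1 ^ 2 / n) * (eps ω * mu1 ω) ∂μ) + ∫ ω, (8 * w1 * w2 * (eps ω ^ 2 * mu1 ω * y2 ω)
            + (8 * w1 * w2 * (eps ω ^ 3 * y2 ω)
            + ((-8 * w1 * w2 / n) * (eps ω * y2 ω)
            + 4 * w1 ^ 2 / n ^ 2))) ∂μ :=
      integral_add (Iem.const_mul _) ((Ie2my.const_mul _).add ((Ie3y.const_mul _).add ((Iey.const_mul _).add (integrable_const _))))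
    have V7 : (∫ ω, (8 * w1 * w2 * (eps ω ^ 2 * mu1 ω * y2 ω)
            + (8 * w1 * w2 * (eps ω ^ 3 * y2 ω)
            + ((-8 * w1 * w2 / n) * (eps ω * y2 ω)
            + 4 * w1 ^ 2 / n ^ 2))) ∂μ)
        = (∫ ω, 8 * w1 * w2 * (eps ω ^ 2 * mu1 ω * y2 ω) ∂μ) + ∫ ω, (8 * w1 * w2 * (eps ω ^ 3 * y2 ω)
            + ((-8 * w1 * w2 / n) * (eps ω * y2 ω)
            + 4 * w1 ^ 2 / n ^ 2)) ∂μ :=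
      integral_add (Ie2my.const_mul _) ((Ie3y.const_mul _).add ((Iey.const_mul _).add (integrable_const _)))
    have V8 : (∫ ω, (8 * w1 * w2 * (eps ω ^ 3 * y2 ω)
            + ((-8 * w1 * w2 / n) * (eps ω * y2 ω)
            + 4 * w1 ^ 2 / n ^ 2)) ∂μ)
        = (∫ ω, 8 * w1 * w2 * (eps ω ^ 3 * y2 ω) ∂μ) + ∫ ω, ((-8 * w1 * w2 / n) * (eps ω * y2 ω)
            + 4 * w1 ^ 2 / n ^ 2) ∂μ :=
      integral_add (Ie3y.const_mul _) ((Iey.const_mul _).add (integrable_const _))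
    have V9 : (∫ ω, ((-8 * w1 * w2 / n) * (eps ω * y2 ω)
            + 4 * w1 ^ 2 / n ^ 2) ∂μ)
        = (∫ ω, (-8 * w1 * w2 / n) * (eps ω * y2 ω) ∂μ) + ∫ ω, 4 * w1 ^ 2 / n ^ 2 ∂μ :=
      integral_add (Iey.const_mul _) (integrable_const _)
    rw [V1, V2, V3, V4, V5, V6, V7, V8, V9,
      integral_const_mul, integral_const_mul, integral_const_mul, integral_const_mul,
      integral_const_mul, integral_const_mul, integral_const_mul, integral_const_mul,
      integral_const_mul, integral_const,
      Ee2m2', Ee4, Ee2, Ee2y2', Ee3m', Eem, Ee2my, Ee3y', Eey]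
    simp only [probReal_univ, measure_univ, ENNReal.toReal_one, smul_eq_mul, one_mul, mul_zero, add_zero]
    field_simp
    ring
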